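/- Let n ≥ 2 and 0 < ε < 1. Let S be uniformly distributed on the 2^n − 1 nonzero elements of (ℤ/2ℤ)^n, and given S = s let J have conditional distribution P(J = j | S = s) = (1+ε)/2^n if j·s = 0 and (1−ε)/2^n if j·s = 1. Then the mutual information I(S;J) = H(J) − H(J|S), which equals −(1 − (1+ε)/2^n) log₂((1 − (1+ε)/2^n)/(2^n − 1)) + (2^(n−1) − 1)((1+ε)/2^n) log₂((1+ε)/2^n) + ((1−ε)/2) log₂((1−ε)/2^n), is strictly positive. (Thus a single quantum query with an unentangled pseudo-pure state yields positive information about Simon's parameter s for every ε > 0, whereas a single classical query yields none.) -/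

import Mathlib

open Finset

/-- Conditional Simon outcome distribution for a pseudo-pure input of purity `ε`,
given period `s`: `P(J = j | S = s) = (1+ε)/2^n` if `j·s = 0` and `(1-ε)/2^n` otherwise. -/
noncomputable def simonPPSCond (n : ℕ) (ε : ℝ) (s j : Fin n → ZMod 2) : ℝ :=
  if ∑ i, j i * s i = 0 then (1 + ε) / 2 ^ n else (1 - ε) / 2 ^ n

/-- Marginal distribution of the outcome `J` when the period `S` is uniform on the
`2^n - 1` nonzero elements of `(ℤ/2ℤ)ⁿ`. -/
noncomputable def simonPPSMarginal (n : ℕ) (ε : ℝ) (j : Fin n → ZMod 2) : ℝ :=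
  ∑ s ∈ univ.filter fun s : Fin n → ZMod 2 => s ≠ 0,
    (1 / ((2 : ℝ) ^ n - 1)) * simonPPSCond n ε s j

/-- The entropy `H(J)` of the outcome of one pseudo-pure Simon query. -/
noncomputable def simonPPSHJ (n : ℕ) (ε : ℝ) : ℝ :=
  -∑ j : Fin n → ZMod 2, simonPPSMarginal n ε j * Real.logb 2 (simonPPSMarginal n ε j)

/-- The conditional entropy `H(J|S) = Σ_s P(S = s) H(J | S = s)`. -/
noncomputable def simonPPSHJS (n : ℕ) (ε : ℝ) : ℝ :=
  ∑ s ∈ univ.filter fun s : Fin n → ZMod 2 => s ≠ 0,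
    (1 / ((2 : ℝ) ^ n - 1)) *
      (-∑ j : Fin n → ZMod 2, simonPPSCond n ε s j * Real.logb 2 (simonPPSCond n ε s j))


lemma zmod2_flip (x : ZMod 2) : x + 1 = 0 ↔ ¬ x = 0 := by revert x; decide

lemma simon_card_dot (n : ℕ) (w : Fin n → ZMod 2) (hw : w ≠ 0) :
    (univ.filter fun v : Fin n → ZMod 2 => ∑ i, v i * w i = 0).card
      = (univ.filter fun v : Fin n → ZMod 2 => ¬ ∑ i, v i * w i = 0).card := by
  obtain ⟨i, hi⟩ : ∃ i, w i ≠ 0 := by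
    by_contra h
    push_neg at h
    exact hw (funext h)
  have hwi : w i = 1 := by
    rcases (show ∀ x : ZMod 2, x = 0 ∨ x = 1 by decide) (w i) with h | h
    · exact absurd h hi
    · exact h
  set δ : Fin n → ZMod 2 := fun k => if k = i then 1 else 0 with hδ
  have hdot : ∀ v : Fin n → ZMod 2, (∑ k, (v + δ) k * w k) = (∑ k, v k * w k) + 1 := by
    intro v
    simp only [Pi.add_apply, add_mul]
    rw [Finset.sum_add_distrib]
    congr 1
    have h1 : ∀ k, δ k * w k = if k = i then w i else 0 := by
      intro k
      by_cases h : k = i <;> simp [hδ, h]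
    rw [Finset.sum_congr rfl fun k _ => h1 k]
    simp [hwi]
  have hdd : δ + δ = 0 := by
    funext k
    by_cases h : k = i <;> simp [hδ, h] <;> decide
  apply Finset.card_bij' (fun v _ => v + δ) (fun v _ => v + δ)
  · intro a ha
    simp only [mem_filter, mem_univ, true_and] at ha ⊢
    rw [hdot, ha]
    decide
  · intro a ha
    simp only [mem_filter, mem_univ, true_and] at ha ⊢
    rw [hdot, zmod2_flip]
    exact ha
  · intro a _
    rw [add_assoc, hdd, add_zero]
  · intro a _
    rw [add_assoc, hdd, add_zero]

lemma simon_card_univ (n : ℕ) : (univ : Finset (Fin n → ZMod 2)).card = 2 ^ n := by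
  simp [card_univ]

lemma simon_card_dot_zero (n : ℕ) (hn : 1 ≤ n) (w : Fin n → ZMod 2) (hw : w ≠ 0) :
    (univ.filter fun v : Fin n → ZMod 2 => ∑ i, v i * w i = 0).card = 2 ^ (n - 1) ∧
    (univ.filter fun v : Fin n → ZMod 2 => ¬ ∑ i, v i * w i = 0).card = 2 ^ (n - 1) := by
  have hBA : (univ.filter fun v : Fin n → ZMod 2 => ¬ ∑ i, v i * w i = 0)
      = univ \ (univ.filter fun v : Fin n → ZMod 2 => ∑ i, v i * w i = 0) := by
    ext a; simp
  have hle := Finset.card_filter_le (univ : Finset (Fin n → ZMod 2))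
      (fun v => ∑ i, v i * w i = 0)
  have htot : (univ.filter fun v : Fin n → ZMod 2 => ∑ i, v i * w i = 0).card
      + (univ.filter fun v : Fin n → ZMod 2 => ¬ ∑ i, v i * w i = 0).card
      = (univ : Finset (Fin n → ZMod 2)).card := by
    rw [hBA, Finset.card_sdiff_of_subset (Finset.filter_subset _ _)]
    exact Nat.add_sub_cancel' hle
  have hcard := simon_card_univ n
  have heq := simon_card_dot n w hw
  obtain ⟨m, rfl⟩ : ∃ m, n = m + 1 := ⟨n - 1, (Nat.sub_add_cancel hn).symm⟩
  rw [hcard, pow_succ] at htot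
  simp only [Nat.add_sub_cancel]
  generalize hA : (univ.filter fun v : Fin (m+1) → ZMod 2 => ∑ i, v i * w i = 0).card = a
    at heq htot ⊢
  generalize hB : (univ.filter fun v : Fin (m+1) → ZMod 2 => ¬ ∑ i, v i * w i = 0).card = b
    at heq htot ⊢
  clear hBA hle hcard hA hB hw w
  omega

/-- Version with the fixed vector on the left of the product. -/
lemma simon_card_dot_zero' (n : ℕ) (hn : 1 ≤ n) (w : Fin n → ZMod 2) (hw : w ≠ 0) :
    (univ.filter fun v : Fin n → ZMod 2 => ∑ i, w i * v i = 0).card = 2 ^ (n - 1) ∧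
    (univ.filter fun v : Fin n → ZMod 2 => ¬ ∑ i, w i * v i = 0).card = 2 ^ (n - 1) := by
  have h1 : (univ.filter fun v : Fin n → ZMod 2 => ∑ i, w i * v i = 0)
      = (univ.filter fun v : Fin n → ZMod 2 => ∑ i, v i * w i = 0) := by
    apply Finset.filter_congr
    intro x _
    rw [Finset.sum_congr rfl fun i _ => mul_comm (w i) (x i)]
  have h2 : (univ.filter fun v : Fin n → ZMod 2 => ¬ ∑ i, w i * v i = 0)
      = (univ.filter fun v : Fin n → ZMod 2 => ¬ ∑ i, v i * w i = 0) := by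
    apply Finset.filter_congr
    intro x _
    rw [Finset.sum_congr rfl fun i _ => mul_comm (w i) (x i)]
  rw [h1, h2]
  exact simon_card_dot_zero n hn w hw

lemma simon_card_ne_and_dot (n : ℕ) (hn : 1 ≤ n) (j : Fin n → ZMod 2) (hj : j ≠ 0) :
    (univ.filter fun s : Fin n → ZMod 2 => s ≠ 0 ∧ ∑ i, j i * s i = 0).card
      = 2 ^ (n - 1) - 1 := by
  have hmem : (0 : Fin n → ZMod 2) ∈ univ.filter fun s : Fin n → ZMod 2 => ∑ i, j i * s i = 0 := by
    simp
  have hset : (univ.filter fun s : Fin n → ZMod 2 => s ≠ 0 ∧ ∑ i, j i * s i = 0)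
      = (univ.filter fun s : Fin n → ZMod 2 => ∑ i, j i * s i = 0).erase 0 := by
    ext a
    simp only [mem_filter, mem_univ, true_and, Finset.mem_erase]
  rw [hset, Finset.card_erase_of_mem hmem, (simon_card_dot_zero' n hn j hj).1]

lemma simon_card_ne_and_not_dot (n : ℕ) (hn : 1 ≤ n) (j : Fin n → ZMod 2) (hj : j ≠ 0) :
    (univ.filter fun s : Fin n → ZMod 2 => s ≠ 0 ∧ ¬ ∑ i, j i * s i = 0).card
      = 2 ^ (n - 1) := by
  have hset : (univ.filter fun s : Fin n → ZMod 2 => s ≠ 0 ∧ ¬ ∑ i, j i * s i = 0)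
      = (univ.filter fun s : Fin n → ZMod 2 => ¬ ∑ i, j i * s i = 0) := by
    ext a
    simp only [mem_filter, mem_univ, true_and]
    constructor
    · tauto
    · intro h
      refine ⟨fun h0 => h ?_, h⟩
      subst h0
      simp
  rw [hset, (simon_card_dot_zero' n hn j hj).2]

lemma simon_card_ne (n : ℕ) :
    (univ.filter fun s : Fin n → ZMod 2 => s ≠ 0).card = 2 ^ n - 1 := by
  rw [Finset.filter_ne', Finset.card_erase_of_mem (mem_univ 0), simon_card_univ]

lemma simon_two_pow_pos (n : ℕ) : (0:ℝ) < 2 ^ n := by positivity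

lemma simon_one_le_two_pow (n : ℕ) : (1:ℝ) ≤ 2 ^ n := one_le_pow₀ (by norm_num)

lemma simon_two_le_two_pow (n : ℕ) (hn : 1 ≤ n) : (2:ℝ) ≤ 2 ^ n := by
  calc (2:ℝ) = 2 ^ 1 := (pow_one 2).symm
  _ ≤ 2 ^ n := pow_le_pow_right₀ (by norm_num) hn

lemma simon_sub_one_ne (n : ℕ) (hn : 1 ≤ n) : ((2:ℝ) ^ n - 1) ≠ 0 := by
  have := simon_two_le_two_pow n hn
  linarith

lemma simon_cast_card (n : ℕ) : ((2 ^ n - 1 : ℕ) : ℝ) = 2 ^ n - 1 := by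
  rw [Nat.cast_sub Nat.one_le_two_pow]
  push_cast
  ring

lemma simon_marg_zero (n : ℕ) (hn : 1 ≤ n) (ε : ℝ) :
    simonPPSMarginal n ε 0 = (1 + ε) / 2 ^ n := by
  have hne := simon_sub_one_ne n hn
  rw [simonPPSMarginal]
  have h1 : ∀ s ∈ (univ.filter fun s : Fin n → ZMod 2 => s ≠ 0),
      (1 / ((2:ℝ) ^ n - 1)) * simonPPSCond n ε s 0
        = (1 / ((2:ℝ) ^ n - 1)) * ((1 + ε) / 2 ^ n) := by
    intro s _
    rw [simonPPSCond]
    simp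
  rw [Finset.sum_congr rfl h1, Finset.sum_const, simon_card_ne, nsmul_eq_mul, simon_cast_card]
  field_simp

lemma simon_marg_ne (n : ℕ) (hn : 1 ≤ n) (ε : ℝ) (j : Fin n → ZMod 2) (hj : j ≠ 0) :
    simonPPSMarginal n ε j = (1 - (1 + ε) / 2 ^ n) / ((2:ℝ) ^ n - 1) := by
  rw [simonPPSMarginal]
  simp only [simonPPSCond, mul_ite]
  rw [Finset.sum_ite, Finset.sum_const, Finset.sum_const, Finset.filter_filter,
    Finset.filter_filter, simon_card_ne_and_dot n hn j hj,
    simon_card_ne_and_not_dot n hn j hj, nsmul_eq_mul, nsmul_eq_mul]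
  obtain ⟨m, rfl⟩ : ∃ m, n = m + 1 := ⟨n - 1, (Nat.sub_add_cancel hn).symm⟩
  simp only [Nat.add_sub_cancel]
  rw [simon_cast_card m]
  push_cast
  have h1 : (2:ℝ) ^ m ≠ 0 := by positivity
  have h2 : ((2:ℝ) ^ (m + 1) - 1) ≠ 0 := simon_sub_one_ne (m+1) (by omega)
  rw [pow_succ] at *
  field_simp
  ring

lemma simon_HJ (n : ℕ) (hn : 1 ≤ n) (ε : ℝ) :
    simonPPSHJ n ε = -((1 + ε) / 2 ^ n * Real.logb 2 ((1 + ε) / 2 ^ n)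
      + ((2:ℝ) ^ n - 1) * ((1 - (1 + ε) / 2 ^ n) / ((2:ℝ) ^ n - 1)
          * Real.logb 2 ((1 - (1 + ε) / 2 ^ n) / ((2:ℝ) ^ n - 1)))) := by
  rw [simonPPSHJ, ← Finset.add_sum_erase _ _ (mem_univ (0 : Fin n → ZMod 2))]
  rw [simon_marg_zero n hn ε]
  have h1 : (∑ j ∈ univ.erase (0 : Fin n → ZMod 2),
        simonPPSMarginal n ε j * Real.logb 2 (simonPPSMarginal n ε j))
      = ∑ _j ∈ univ.erase (0 : Fin n → ZMod 2),
        ((1 - (1 + ε) / 2 ^ n) / ((2:ℝ) ^ n - 1)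
          * Real.logb 2 ((1 - (1 + ε) / 2 ^ n) / ((2:ℝ) ^ n - 1))) := by
    refine Finset.sum_congr rfl fun j hj => ?_
    rw [simon_marg_ne n hn ε j (Finset.mem_erase.mp hj).1]
  rw [h1, Finset.sum_const, Finset.card_erase_of_mem (mem_univ 0), card_univ, nsmul_eq_mul]
  have h2 : (Fintype.card (Fin n → ZMod 2)) = 2 ^ n := by simp
  rw [h2, simon_cast_card]

lemma simon_HJS (n : ℕ) (hn : 1 ≤ n) (ε : ℝ) :
    simonPPSHJS n ε = -((2:ℝ) ^ (n - 1) * ((1 + ε) / 2 ^ n * Real.logb 2 ((1 + ε) / 2 ^ n))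
      + (2:ℝ) ^ (n - 1) * ((1 - ε) / 2 ^ n * Real.logb 2 ((1 - ε) / 2 ^ n))) := by
  set K : ℝ := (2:ℝ) ^ (n - 1) * ((1 + ε) / 2 ^ n * Real.logb 2 ((1 + ε) / 2 ^ n))
      + (2:ℝ) ^ (n - 1) * ((1 - ε) / 2 ^ n * Real.logb 2 ((1 - ε) / 2 ^ n)) with hK
  have hinner : ∀ s : Fin n → ZMod 2, s ≠ 0 →
      (∑ j : Fin n → ZMod 2, simonPPSCond n ε s j * Real.logb 2 (simonPPSCond n ε s j)) = K := by
    intro s hs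
    have h1 : ∀ j : Fin n → ZMod 2,
        simonPPSCond n ε s j * Real.logb 2 (simonPPSCond n ε s j)
        = if ∑ i, j i * s i = 0 then ((1 + ε) / 2 ^ n * Real.logb 2 ((1 + ε) / 2 ^ n))
          else ((1 - ε) / 2 ^ n * Real.logb 2 ((1 - ε) / 2 ^ n)) := by
      intro j
      rw [simonPPSCond]
      split <;> rfl
    rw [Finset.sum_congr rfl fun j _ => h1 j, Finset.sum_ite, Finset.sum_const,
      Finset.sum_const, (simon_card_dot_zero n hn s hs).1, (simon_card_dot_zero n hn s hs).2,
      nsmul_eq_mul, nsmul_eq_mul, hK]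
    push_cast
    ring
  rw [simonPPSHJS]
  have h2 : (∑ s ∈ univ.filter fun s : Fin n → ZMod 2 => s ≠ 0,
      (1 / ((2 : ℝ) ^ n - 1)) *
        (-∑ j : Fin n → ZMod 2, simonPPSCond n ε s j * Real.logb 2 (simonPPSCond n ε s j)))
      = ∑ _s ∈ univ.filter fun s : Fin n → ZMod 2 => s ≠ 0, (1 / ((2 : ℝ) ^ n - 1)) * (-K) := by
    refine Finset.sum_congr rfl fun s hs => ?_
    rw [hinner s (by simpa using (Finset.mem_filter.mp hs).2)]
  rw [h2, Finset.sum_const, simon_card_ne, nsmul_eq_mul, simon_cast_card]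
  have hne := simon_sub_one_ne n hn
  field_simp

lemma simon_log_gt (x y : ℝ) (hx : 0 < x) (hy : 0 < y) (hxy : y ≠ x) :
    x - y < x * (Real.log x - Real.log y) := by
  have h0 : y / x ≠ 1 := by
    intro h
    apply hxy
    have := (div_eq_iff hx.ne').mp h
    simpa using this
  have h := Real.log_lt_sub_one_of_pos (div_pos hy hx) h0
  rw [Real.log_div hy.ne' hx.ne'] at h
  have h2 := mul_lt_mul_of_pos_left h hx
  have h3 : x * (y / x - 1) = y - x := by field_simp
  nlinarith

lemma simon_log_ge (x y : ℝ) (hx : 0 < x) (hy : 0 < y) :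
    x - y ≤ x * (Real.log x - Real.log y) := by
  have h := Real.log_le_sub_one_of_pos (div_pos hy hx)
  rw [Real.log_div hy.ne' hx.ne'] at h
  have h2 := mul_le_mul_of_nonneg_left h hx.le
  have h3 : x * (y / x - 1) = y - x := by field_simp
  nlinarith

/-- One Simon query with an unentangled pseudo-pure state of purity `0 < ε < 1` yields
mutual information `I(S;J) = H(J) - H(J|S)` equal to
`-(1 - (1+ε)/2^n) log₂((1 - (1+ε)/2^n)/(2^n-1)) + (2^(n-1)-1)((1+ε)/2^n) log₂((1+ε)/2^n)
 + ((1-ε)/2) log₂((1-ε)/2^n)`, and this quantity is strictly positive,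
whereas a single classical query yields no information. -/
theorem simon_pps_mutual_information_pos (n : ℕ) (hn : 2 ≤ n) (ε : ℝ)
    (hε0 : 0 < ε) (hε1 : ε < 1) :
    simonPPSHJ n ε - simonPPSHJS n ε =
      -(1 - (1 + ε) / 2 ^ n) *
          Real.logb 2 ((1 - (1 + ε) / 2 ^ n) / ((2 : ℝ) ^ n - 1)) +
        ((2 : ℝ) ^ (n - 1) - 1) * ((1 + ε) / 2 ^ n) * Real.logb 2 ((1 + ε) / 2 ^ n) +
        ((1 - ε) / 2) * Real.logb 2 ((1 - ε) / 2 ^ n) ∧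
    0 < simonPPSHJ n ε - simonPPSHJS n ε := by
  have hn1 : 1 ≤ n := by omega
  obtain ⟨m, rfl⟩ : ∃ m, n = m + 1 := ⟨n - 1, (Nat.sub_add_cancel hn1).symm⟩
  have hm : 1 ≤ m := by omega
  simp only [Nat.add_sub_cancel]
  have hXpos : (0:ℝ) < 2 ^ m := by positivity
  have hX2 : (2:ℝ) ≤ 2 ^ m := simon_two_le_two_pow m hm
  have hNpos : (0:ℝ) < 2 ^ (m+1) := by positivity
  have hN4 : (4:ℝ) ≤ 2 ^ (m+1) := by
    rw [pow_succ]
    nlinarith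
  have hNne : ((2:ℝ) ^ (m+1)) ≠ 0 := hNpos.ne'
  have hN1ne : ((2:ℝ) ^ (m+1) - 1) ≠ 0 := by linarith
  set P : ℝ := (1 + ε) / 2 ^ (m+1) with hPdef
  set Bv : ℝ := (1 - ε) / 2 ^ (m+1) with hBdef
  set Q : ℝ := (1 - (1 + ε) / 2 ^ (m+1)) / ((2:ℝ) ^ (m+1) - 1) with hQdef
  have hP : 0 < P := by rw [hPdef]; positivity
  have h1mP : 0 < 1 - P := by
    rw [hPdef, sub_pos, div_lt_one hNpos]
    linarith
  have hQ : 0 < Q := by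
    rw [hQdef]
    exact div_pos (by rw [← hPdef]; linarith) (by linarith)
  have hBv : 0 < Bv := by
    rw [hBdef]
    exact div_pos (by linarith) hNpos
  have hPN : P * 2 ^ (m+1) = 1 + ε := by
    rw [hPdef]
    field_simp
  have hQP : Q < P := by
    rw [hQdef, div_lt_iff₀ (by linarith), ← hPdef]
    nlinarith
  -- the equality part
  have heqn : simonPPSHJ (m+1) ε - simonPPSHJS (m+1) ε =
      -(1 - P) * Real.logb 2 Q + ((2 : ℝ) ^ m - 1) * P * Real.logb 2 P +
        ((1 - ε) / 2) * Real.logb 2 Bv := by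
    rw [simon_HJ (m+1) (by omega) ε, simon_HJS (m+1) (by omega) ε]
    simp only [Nat.add_sub_cancel, ← hPdef, ← hBdef, ← hQdef]
    have e1 : ((2:ℝ) ^ (m+1) - 1) * Q = 1 - P := by
      rw [hQdef, ← hPdef, mul_div_cancel₀ _ hN1ne]
    have e2 : (2:ℝ) ^ m * Bv = (1 - ε) / 2 := by
      rw [hBdef, pow_succ]
      field_simp
    linear_combination (-Real.logb 2 Q) * e1 + (Real.logb 2 Bv) * e2
  have hcA : (0:ℝ) < (2:ℝ) ^ m - 1 := by linarith
  have t1 := simon_log_gt P Q hP hQ (ne_of_lt hQP)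
  have t2 := simon_log_ge Bv Q hBv hQ
  have hbal : ((2:ℝ) ^ m - 1) * (P - Q) + (2:ℝ) ^ m * (Bv - Q) = 0 := by
    rw [hPdef, hQdef, hBdef, pow_succ] at *
    field_simp
    ring
  have u1 := mul_lt_mul_of_pos_left t1 hcA
  have u2 := mul_le_mul_of_nonneg_left t2 hXpos.le
  have hsum : 0 < ((2:ℝ) ^ m - 1) * (P * (Real.log P - Real.log Q))
      + (2:ℝ) ^ m * (Bv * (Real.log Bv - Real.log Q)) := by
    linarith
  have hrw : -(1 - P) * Real.logb 2 Q + ((2 : ℝ) ^ m - 1) * P * Real.logb 2 P +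
        ((1 - ε) / 2) * Real.logb 2 Bv
      = (((2:ℝ) ^ m - 1) * (P * (Real.log P - Real.log Q))
          + (2:ℝ) ^ m * (Bv * (Real.log Bv - Real.log Q))) / Real.log 2 := by
    have e1 : ((2:ℝ) ^ (m+1) - 1) * Q = 1 - P := by
      rw [hQdef, ← hPdef, mul_div_cancel₀ _ hN1ne]
    have e2 : (2:ℝ) ^ m * Bv = (1 - ε) / 2 := by
      rw [hBdef, pow_succ]
      field_simp
    have e3 : (1 - P) = ((2:ℝ) ^ m - 1) * P + (2:ℝ) ^ m * Bv := by
      rw [hPdef, hBdef, pow_succ]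
      field_simp
      ring
    have hnum : -(1 - P) * Real.log Q + ((2:ℝ) ^ m - 1) * P * Real.log P +
          ((1 - ε) / 2) * Real.log Bv
        = ((2:ℝ) ^ m - 1) * (P * (Real.log P - Real.log Q))
          + (2:ℝ) ^ m * (Bv * (Real.log Bv - Real.log Q)) := by
      linear_combination (-Real.log Q) * e3 + (-Real.log Bv) * e2
    have hsplit : -(1 - P) * Real.logb 2 Q + ((2 : ℝ) ^ m - 1) * P * Real.logb 2 P +
          ((1 - ε) / 2) * Real.logb 2 Bv
        = (-(1 - P) * Real.log Q + ((2:ℝ) ^ m - 1) * P * Real.log P +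
          ((1 - ε) / 2) * Real.log Bv) / Real.log 2 := by
      simp only [Real.logb]
      ring
    rw [hsplit, hnum]
  constructor
  · exact heqn
  · rw [heqn, hrw]
    exact div_pos hsum (Real.log_pos one_lt_two)
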